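/- Subadditivity of entanglement of purification: for bipartite density matrices ρ on A₁ ⊗ B₁ and σ on A₂ ⊗ B₂, E_P(ρ ⊗ σ) ≤ E_P(ρ) + E_P(σ), where ρ ⊗ σ is viewed as a bipartite state across the cut A₁A₂ : B₁B₂. -/

import Mathlib

open Matrix BigOperators Kronecker
open scoped ComplexOrder

noncomputable section

/-- A density matrix: positive semidefinite with trace one. -/
def IsDensity {n : Type*} [Fintype n] [DecidableEq n] (ρ : Matrix n n ℂ) : Prop :=
  ρ.PosSemidef ∧ ρ.trace = 1

/-- von Neumann entropy (base 2), via the eigenvalues of a Hermitian matrix,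
with the convention `0 log 0 = 0` (since `Real.logb 2 0 = 0`). -/
noncomputable def vN {n : Type*} [Fintype n] [DecidableEq n] (ρ : Matrix n n ℂ) : ℝ :=
  if h : ρ.IsHermitian then -∑ i, h.eigenvalues i * Real.logb 2 (h.eigenvalues i) else 0

/-- The rank-one projector `|ψ⟩⟨ψ|` associated to a vector `ψ`. -/
def pureMat {n : Type*} (ψ : n → ℂ) : Matrix n n ℂ :=
  Matrix.of fun i j => ψ i * star (ψ j)

/-- Partial trace over the second (right) tensor factor. -/
def ptrR {A B : Type*} [Fintype B] (ρ : Matrix (A × B) (A × B) ℂ) : Matrix A A ℂ :=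
  Matrix.of fun a a' => ∑ b, ρ (a, b) (a', b)

/-- Partial trace over the first (left) tensor factor. -/
def ptrL {A B : Type*} [Fintype A] (ρ : Matrix (A × B) (A × B) ℂ) : Matrix B B ℂ :=
  Matrix.of fun b b' => ∑ a, ρ (a, b) (a, b')

/-- Reduced state on `A ⊗ B` of a pure vector on `(A ⊗ A') ⊗ (B ⊗ B')`. -/
def redAB {A B A' B' : Type*} [Fintype A'] [Fintype B']
    (ψ : (A × A') × (B × B') → ℂ) : Matrix (A × B) (A × B) ℂ :=
  Matrix.of fun p q => ∑ x, ∑ y, ψ ((p.1, x), (p.2, y)) * star (ψ ((q.1, x), (q.2, y)))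

/-- Reduced state on `A ⊗ A'` of a pure vector on `(A ⊗ A') ⊗ (B ⊗ B')`. -/
def redAAp {A B A' B' : Type*} [Fintype B] [Fintype B']
    (ψ : (A × A') × (B × B') → ℂ) : Matrix (A × A') (A × A') ℂ :=
  Matrix.of fun p q => ∑ b, ∑ y, ψ (p, (b, y)) * star (ψ (q, (b, y)))

/-- `ψ ∈ (A ⊗ A') ⊗ (B ⊗ B')` is a purification of the bipartite state `ρ` on `A ⊗ B`. -/
def IsPurification {A B A' B' : Type*} [Fintype A] [Fintype B] [Fintype A'] [Fintype B']
    (ρ : Matrix (A × B) (A × B) ℂ) (ψ : (A × A') × (B × B') → ℂ) : Prop :=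
  (∑ i, Complex.normSq (ψ i)) = 1 ∧ redAB ψ = ρ

/-- Entanglement of purification: the infimum of `S(AA')` over purifications of `ρ`,
where (w.l.o.g., by Terhal et al. / Ibinson et al.) the ancillas `A'`, `B'` have
dimension `|A||B|`. -/
noncomputable def EP {A B : Type*} [Fintype A] [Fintype B] [DecidableEq A] [DecidableEq B]
    (ρ : Matrix (A × B) (A × B) ℂ) : ℝ :=
  sInf { e | ∃ ψ : (A × Fin (Fintype.card A * Fintype.card B)) ×
      (B × Fin (Fintype.card A * Fintype.card B)) → ℂ,
      IsPurification ρ ψ ∧ e = vN (redAAp ψ) }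

/-- `n`-fold tensor power of a bipartite state, regrouped across the cut `Aⁿ : Bⁿ`. -/
def tpow {A B : Type*} (ρ : Matrix (A × B) (A × B) ℂ) (n : ℕ) :
    Matrix ((Fin n → A) × (Fin n → B)) ((Fin n → A) × (Fin n → B)) ℂ :=
  Matrix.of fun p q => ∏ i, ρ (p.1 i, p.2 i) (q.1 i, q.2 i)

/-- Regularized entanglement of purification. -/
noncomputable def EPinf {A B : Type*} [Fintype A] [Fintype B] [DecidableEq A] [DecidableEq B]
    (ρ : Matrix (A × B) (A × B) ℂ) : ℝ :=
  ⨅ n : ℕ+, EP (tpow ρ (n : ℕ)) / (n : ℕ)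

/-- Shannon entropy (base 2) of a finitely supported probability vector. -/
noncomputable def shannon {ι : Type*} [Fintype ι] (p : ι → ℝ) : ℝ :=
  -∑ i, p i * Real.logb 2 (p i)

/-- A generic purification of `ρ` on `H` with purifying system `K`. -/
def Purifies {H K : Type*} [Fintype H] [Fintype K] (ρ : Matrix H H ℂ) (ψ : H × K → ℂ) : Prop :=
  (∑ i, Complex.normSq (ψ i)) = 1 ∧
  (Matrix.of fun h h' => ∑ k, ψ (h, k) * star (ψ (h', k))) = ρ

/-- The singlet vector `(|01⟩ − |10⟩)/√2` on `ℂ² ⊗ ℂ²`. -/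
def singletVec : Fin 2 × Fin 2 → ℂ := fun p =>
  if p = (0, 1) then ((1 / Real.sqrt 2 : ℝ) : ℂ)
  else if p = (1, 0) then (-(1 / Real.sqrt 2 : ℝ) : ℂ) else 0

/-- The two-qubit Werner state with singlet fraction `f`. -/
def werner (f : ℝ) : Matrix (Fin 2 × Fin 2) (Fin 2 × Fin 2) ℂ :=
  (f : ℂ) • pureMat singletVec + (((1 - f) / 3 : ℝ) : ℂ) • (1 - pureMat singletVec)


section EPaux
open Polynomial

variable {n m : Type*} [Fintype n] [DecidableEq n] [Fintype m] [DecidableEq m]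

lemma charpoly_diag (d : n → ℂ) : (Matrix.diagonal d).charpoly = ∏ i, (X - C (d i)) := by
  have h : (Matrix.diagonal d).charmatrix = Matrix.diagonal fun i => X - C (d i) := by
    ext i j
    by_cases h : i = j
    · subst h; simp
    · rw [Matrix.charmatrix_apply_ne _ _ _ h, Matrix.diagonal_apply_ne _ h,
        Matrix.diagonal_apply_ne _ h, map_zero, neg_zero]
  rw [Matrix.charpoly, h, Matrix.det_diagonal]

lemma charpoly_conj (U A : Matrix n n ℂ) (hU : U ∈ Matrix.unitaryGroup n ℂ) :
    (U * A * star U).charpoly = A.charpoly := by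
  have hU1 : U * star U = 1 := Matrix.mem_unitaryGroup_iff.mp hU
  have hmap : (U.map (C : ℂ →+* ℂ[X])) * ((star U).map C) = 1 := by
    rw [← Matrix.map_mul, hU1, Matrix.map_one _ (map_zero C) (map_one C)]
  have key : Matrix.charmatrix (U * A * star U) =
      (U.map C) * Matrix.charmatrix A * ((star U).map C) := by
    rw [Matrix.charmatrix, Matrix.charmatrix, Matrix.mul_sub, Matrix.sub_mul]
    congr 1
    · rw [← (Matrix.scalar_commute (X : ℂ[X]) (Commute.all X) (U.map C)).eq, Matrix.mul_assoc,
        hmap, Matrix.mul_one]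
    · simp only [RingHom.mapMatrix_apply, Matrix.map_mul]
  rw [Matrix.charpoly, Matrix.charpoly, key, Matrix.det_mul, Matrix.det_mul]
  have hdet : (U.map (C : ℂ →+* ℂ[X])).det * ((star U).map C).det = 1 := by
    rw [← Matrix.det_mul, hmap, Matrix.det_one]
  calc (U.map (C : ℂ →+* ℂ[X])).det * (Matrix.charmatrix A).det * ((star U).map C).det
      = ((U.map (C : ℂ →+* ℂ[X])).det * ((star U).map C).det) * (Matrix.charmatrix A).det := by
        ring
    _ = (Matrix.charmatrix A).det := by rw [hdet, one_mul]

lemma charpoly_eq_prod_eig {M : Matrix n n ℂ} (hM : M.IsHermitian) :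
    M.charpoly = ∏ i, (X - C ((hM.eigenvalues i : ℝ) : ℂ)) := by
  conv_lhs => rw [hM.spectral_theorem, Unitary.conjStarAlgAut_apply]
  rw [charpoly_conj _ _ (hM.eigenvectorUnitary).2, charpoly_diag]
  rfl

omit [DecidableEq m] in
lemma sum_f_eig {M : Matrix n n ℂ} (hM : M.IsHermitian) (c : m → ℝ)
    (h : M.charpoly = ∏ k, (X - C ((c k : ℝ) : ℂ))) (f : ℝ → ℝ) :
    ∑ i, f (hM.eigenvalues i) = ∑ k, f (c k) := by
  have h2 := (charpoly_eq_prod_eig hM).symm.trans h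
  have h3 : (Finset.univ.val.map fun i => ((hM.eigenvalues i : ℝ) : ℂ)) =
      (Finset.univ.val.map fun k => ((c k : ℝ) : ℂ)) := by
    have := congrArg Polynomial.roots h2
    have e1 : (Multiset.map (fun i => X - C ((hM.eigenvalues i : ℝ) : ℂ)) Finset.univ.val)
        = Multiset.map (fun a : ℂ => X - C a)
          (Finset.univ.val.map fun i => ((hM.eigenvalues i : ℝ) : ℂ)) := by
      rw [Multiset.map_map]; rfl
    have e2 : (Multiset.map (fun k => X - C ((c k : ℝ) : ℂ)) Finset.univ.val)
        = Multiset.map (fun a : ℂ => X - C a)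
          (Finset.univ.val.map fun k => ((c k : ℝ) : ℂ)) := by
      rw [Multiset.map_map]; rfl
    rwa [Finset.prod_eq_multiset_prod, Finset.prod_eq_multiset_prod, e1, e2,
      Polynomial.roots_multiset_prod_X_sub_C, Polynomial.roots_multiset_prod_X_sub_C] at this
  have h4 : (Finset.univ.val.map hM.eigenvalues) = (Finset.univ.val.map c) := by
    apply Multiset.map_injective Complex.ofReal_injective
    rw [Multiset.map_map, Multiset.map_map]; exact h3
  calc ∑ i, f (hM.eigenvalues i) = ((Finset.univ.val.map hM.eigenvalues).map f).sum := by
        rw [Multiset.map_map, Finset.sum_eq_multiset_sum]; rfl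
    _ = ((Finset.univ.val.map c).map f).sum := by rw [h4]
    _ = ∑ k, f (c k) := by rw [Multiset.map_map, Finset.sum_eq_multiset_sum]; rfl

lemma sum_eig_eq_trace {M : Matrix n n ℂ} (hM : M.IsHermitian) :
    ((∑ i, hM.eigenvalues i : ℝ) : ℂ) = M.trace := by
  conv_rhs => rw [hM.spectral_theorem, Unitary.conjStarAlgAut_apply]
  rw [Matrix.trace_mul_cycle]
  rw [show star (hM.eigenvectorUnitary : Matrix n n ℂ) * (hM.eigenvectorUnitary : Matrix n n ℂ)
      = 1 from Matrix.mem_unitaryGroup_iff'.mp (hM.eigenvectorUnitary).2, one_mul,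
    Matrix.trace_diagonal]
  push_cast
  rfl

lemma sum_eig_one {M : Matrix n n ℂ} (hM : M.IsHermitian) (ht : M.trace = 1) :
    ∑ i, hM.eigenvalues i = 1 := by
  have := (sum_eig_eq_trace hM).trans ht
  exact_mod_cast this

lemma spectral_entry {M : Matrix n n ℂ} (hM : M.IsHermitian) (p q : n) :
    M p q = ∑ k, ((hM.eigenvalues k : ℝ) : ℂ) *
      ((hM.eigenvectorUnitary : Matrix n n ℂ) p k *
        star ((hM.eigenvectorUnitary : Matrix n n ℂ) q k)) := by
  conv_lhs => rw [hM.spectral_theorem, Unitary.conjStarAlgAut_apply]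
  rw [Matrix.mul_apply]
  refine Finset.sum_congr rfl fun k _ => ?_
  rw [Matrix.mul_diagonal, Matrix.star_apply]
  have : ((RCLike.ofReal ∘ hM.eigenvalues) k : ℂ) = ((hM.eigenvalues k : ℝ) : ℂ) := rfl
  rw [this]
  ring

end EPaux
section EPaux2
open Polynomial

variable {n m : Type*} [Fintype n] [DecidableEq n] [Fintype m] [DecidableEq m]

lemma gram_posSemidef {H K : Type*} [Fintype H] [Fintype K] [DecidableEq H] (ψ : H × K → ℂ) :
    (Matrix.of fun h h' : H => ∑ k, ψ (h, k) * star (ψ (h', k))).PosSemidef := by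
  have h : (Matrix.of fun h h' : H => ∑ k, ψ (h, k) * star (ψ (h', k)))
      = (Matrix.of fun (h : H) (k : K) => ψ (h, k)) *
        (Matrix.of fun (h : H) (k : K) => ψ (h, k))ᴴ := by
    ext h h'
    simp [Matrix.mul_apply, Matrix.conjTranspose_apply]
  rw [h]
  exact Matrix.posSemidef_self_mul_conjTranspose _

lemma redAAp_eq_gram {A B A' B' : Type*} [Fintype B] [Fintype B']
    (ψ : (A × A') × (B × B') → ℂ) :
    redAAp ψ = Matrix.of fun p q : A × A' => ∑ k : B × B', ψ (p, k) * star (ψ (q, k)) := by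
  ext p q
  simp only [redAAp, Matrix.of_apply]
  exact (Fintype.sum_prod_type fun k => ψ (p, k) * star (ψ (q, k))).symm

lemma redAAp_posSemidef {A B A' B' : Type*} [Fintype A] [Fintype B] [Fintype A'] [Fintype B']
    [DecidableEq A] [DecidableEq A'] (ψ : (A × A') × (B × B') → ℂ) :
    (redAAp ψ).PosSemidef := by
  rw [redAAp_eq_gram]; exact gram_posSemidef ψ

lemma redAAp_trace {A B A' B' : Type*} [Fintype A] [Fintype B] [Fintype A'] [Fintype B']
    (ψ : (A × A') × (B × B') → ℂ) (hn : (∑ i, Complex.normSq (ψ i)) = 1) :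
    (redAAp ψ).trace = 1 := by
  have h1 : (∑ i, Complex.normSq (ψ i)) = ∑ p : A × A', ∑ k : B × B',
      Complex.normSq (ψ (p, k)) := Fintype.sum_prod_type (fun i => Complex.normSq (ψ i))
  have h2 : (redAAp ψ).trace = ((∑ p : A × A', ∑ k : B × B', Complex.normSq (ψ (p, k)) : ℝ) : ℂ) := by
    rw [Matrix.trace]
    push_cast
    refine Finset.sum_congr rfl fun p _ => ?_
    rw [show (redAAp ψ).diag p = ∑ k : B × B', ψ (p, k) * star (ψ (p, k)) from by
      simp only [Matrix.diag_apply]; rw [redAAp_eq_gram]; rfl]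
    refine Finset.sum_congr rfl fun k _ => ?_
    rw [show star (ψ (p, k)) = starRingEnd ℂ (ψ (p, k)) from rfl, Complex.mul_conj]
  rw [h2, ← h1, hn, Complex.ofReal_one]

lemma vN_eq {M : Matrix n n ℂ} (hM : M.IsHermitian) :
    vN M = -∑ i, hM.eigenvalues i * Real.logb 2 (hM.eigenvalues i) := by
  rw [vN, dif_pos hM]

lemma vN_nonneg {M : Matrix n n ℂ} (hpsd : M.PosSemidef) (htr : M.trace = 1) : 0 ≤ vN M := by
  rw [vN_eq hpsd.1, neg_nonneg]
  have hsum := sum_eig_one hpsd.1 htr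
  refine Finset.sum_nonpos fun i _ => ?_
  have h0 : 0 ≤ hpsd.1.eigenvalues i := hpsd.eigenvalues_nonneg i
  have h1 : hpsd.1.eigenvalues i ≤ 1 := by
    rw [← hsum]
    exact Finset.single_le_sum (fun j _ => hpsd.eigenvalues_nonneg j) (Finset.mem_univ i)
  have : Real.logb 2 (hpsd.1.eigenvalues i) ≤ 0 :=
    Real.logb_nonpos (by norm_num) h0 h1
  exact mul_nonpos_iff.mpr (Or.inl ⟨h0, this⟩)

lemma sum4_mul {R : Type*} [CommSemiring R] {α β γ δ : Type*}
    [Fintype α] [Fintype β] [Fintype γ] [Fintype δ]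
    (F : α → β → R) (G : γ → δ → R) :
    ∑ a, ∑ c, ∑ b, ∑ d, F a b * G c d = (∑ a, ∑ b, F a b) * (∑ c, ∑ d, G c d) := by
  rw [Finset.sum_mul]
  refine Finset.sum_congr rfl fun a _ => ?_
  rw [Finset.sum_mul_sum]
  rw [Finset.sum_comm]
  refine Finset.sum_congr rfl fun b _ => ?_
  refine Finset.sum_congr rfl fun c _ => ?_
  rw [Finset.mul_sum]

lemma star_kron (A : Matrix n n ℂ) (B : Matrix m m ℂ) :
    star (A ⊗ₖ B) = (star A) ⊗ₖ (star B) := by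
  ext i k
  obtain ⟨i1, i2⟩ := i
  obtain ⟨k1, k2⟩ := k
  simp only [Matrix.star_apply, Matrix.kroneckerMap_apply]
  rw [star_mul']

lemma kron_unitary {U : Matrix n n ℂ} {V : Matrix m m ℂ}
    (hU : U ∈ Matrix.unitaryGroup n ℂ) (hV : V ∈ Matrix.unitaryGroup m ℂ) :
    (U ⊗ₖ V) ∈ Matrix.unitaryGroup (n × m) ℂ := by
  rw [Matrix.mem_unitaryGroup_iff]
  rw [star_kron, ← Matrix.mul_kronecker_mul, Matrix.mem_unitaryGroup_iff.mp hU,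
    Matrix.mem_unitaryGroup_iff.mp hV, Matrix.one_kronecker_one]

lemma vN_kron {M₁ : Matrix n n ℂ} {M₂ : Matrix m m ℂ}
    (h₁ : M₁.PosSemidef) (h₂ : M₂.PosSemidef) (t₁ : M₁.trace = 1) (t₂ : M₂.trace = 1)
    {K : Type*} [Fintype K] [DecidableEq K] (g : K ≃ n × m)
    (M : Matrix K K ℂ) (hM : M = ((M₁ ⊗ₖ M₂).submatrix g g)) (hMh : M.IsHermitian) :
    vN M = vN M₁ + vN M₂ := by
  set lam := h₁.1.eigenvalues with hlam
  set mu := h₂.1.eigenvalues with hmu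
  -- charpoly of M
  have hcp : M.charpoly = ∏ k : n × m, (X - C (((lam k.1 * mu k.2 : ℝ)) : ℂ)) := by
    have hsub : M = Matrix.reindex g.symm g.symm (M₁ ⊗ₖ M₂) := by
      rw [hM, Matrix.reindex_apply]; simp
    rw [hsub, Matrix.charpoly_reindex]
    set V₁ := (h₁.1.eigenvectorUnitary : Matrix n n ℂ)
    set V₂ := (h₂.1.eigenvectorUnitary : Matrix m m ℂ)
    have hk : M₁ ⊗ₖ M₂ = (V₁ ⊗ₖ V₂) *
        (Matrix.diagonal (fun k : n × m => ((lam k.1 * mu k.2 : ℝ) : ℂ))) * star (V₁ ⊗ₖ V₂) := by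
      conv_lhs => rw [h₁.1.spectral_theorem, h₂.1.spectral_theorem, Unitary.conjStarAlgAut_apply,
        Unitary.conjStarAlgAut_apply]
      rw [Matrix.mul_kronecker_mul, Matrix.mul_kronecker_mul, star_kron,
        Matrix.diagonal_kronecker_diagonal]
      congr 2
      ext k
      push_cast
      rfl
    rw [hk, charpoly_conj _ _ (kron_unitary h₁.1.eigenvectorUnitary.2 h₂.1.eigenvectorUnitary.2),
      charpoly_diag]
  have hsum := sum_f_eig hMh (fun k : n × m => lam k.1 * mu k.2) hcp
    (fun t => t * Real.logb 2 t)
  have hs1 : ∑ i, lam i = 1 := sum_eig_one h₁.1 t₁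
  have hs2 : ∑ j, mu j = 1 := sum_eig_one h₂.1 t₂
  have key : ∑ k : n × m, (lam k.1 * mu k.2) * Real.logb 2 (lam k.1 * mu k.2)
      = (∑ i, lam i * Real.logb 2 (lam i)) + (∑ j, mu j * Real.logb 2 (mu j)) := by
    rw [Fintype.sum_prod_type]
    have hterm : ∀ i j, (lam i * mu j) * Real.logb 2 (lam i * mu j)
        = mu j * (lam i * Real.logb 2 (lam i)) + lam i * (mu j * Real.logb 2 (mu j)) := by
      intro i j
      by_cases hi : lam i = 0
      · simp [hi]
      by_cases hj : mu j = 0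
      · simp [hj]
      rw [Real.logb, Real.log_mul hi hj]
      rw [Real.logb, Real.logb]
      ring
    calc ∑ i, ∑ j, (lam i * mu j) * Real.logb 2 (lam i * mu j)
        = ∑ i, ∑ j, (mu j * (lam i * Real.logb 2 (lam i))
            + lam i * (mu j * Real.logb 2 (mu j))) := by
          exact Finset.sum_congr rfl fun i _ => Finset.sum_congr rfl fun j _ => hterm i j
      _ = ∑ i, ((∑ j, mu j) * (lam i * Real.logb 2 (lam i))
            + lam i * ∑ j, mu j * Real.logb 2 (mu j)) := by
          refine Finset.sum_congr rfl fun i _ => ?_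
          rw [Finset.sum_add_distrib, ← Finset.sum_mul, ← Finset.mul_sum]
      _ = ∑ i, (lam i * Real.logb 2 (lam i)
            + lam i * ∑ j, mu j * Real.logb 2 (mu j)) := by
          refine Finset.sum_congr rfl fun i _ => ?_
          rw [hs2, one_mul]
      _ = (∑ i, lam i * Real.logb 2 (lam i)) + (∑ j, mu j * Real.logb 2 (mu j)) := by
          rw [Finset.sum_add_distrib, ← Finset.sum_mul, hs1, one_mul]
  rw [vN_eq hMh, hsum, key, vN_eq h₁.1, vN_eq h₂.1]
  ring

end EPaux2
section EPaux3
set_option maxHeartbeats 1600000 in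

lemma exists_purification {A B : Type*} [Fintype A] [Fintype B] [DecidableEq A] [DecidableEq B]
    (ρ : Matrix (A × B) (A × B) ℂ) (hρ : IsDensity ρ) :
    ∃ ψ : (A × Fin (Fintype.card A * Fintype.card B)) ×
      (B × Fin (Fintype.card A * Fintype.card B)) → ℂ, IsPurification ρ ψ := by
  classical
  have hN : 0 < Fintype.card A * Fintype.card B := by
    rcases Nat.eq_zero_or_pos (Fintype.card A * Fintype.card B) with h | h
    · exfalso
      rw [← Fintype.card_prod] at h
      have he : IsEmpty (A × B) := Fintype.card_eq_zero_iff.mp h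
      have htr := hρ.2
      rw [Matrix.trace] at htr
      rw [Finset.univ_eq_empty, Finset.sum_empty] at htr
      exact zero_ne_one htr
    · exact h
  set N := Fintype.card A * Fintype.card B with hNdef
  have hcard : Fintype.card (A × B) = N := by simp [Fintype.card_prod, hNdef]
  obtain ⟨e⟩ : Nonempty (A × B ≃ Fin N) := ⟨Fintype.equivFinOfCardEq hcard⟩
  have hherm : ρ.IsHermitian := hρ.1.1
  set U : Matrix (A × B) (A × B) ℂ := (hherm.eigenvectorUnitary : Matrix (A × B) (A × B) ℂ)
    with hU
  set lam := hherm.eigenvalues with hlamdef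
  have hlam0 : ∀ k, 0 ≤ lam k := fun k => hρ.1.eigenvalues_nonneg k
  let y0 : Fin N := ⟨0, hN⟩
  set ψ : (A × Fin N) × (B × Fin N) → ℂ := fun i =>
    if i.2.2 = y0 then
      ((Real.sqrt (lam (e.symm i.1.2)) : ℝ) : ℂ) * U (i.1.1, i.2.1) (e.symm i.1.2)
    else 0 with hψ
  have hcol : ∀ k : A × B, ∑ p : A × B, Complex.normSq (U p k) = 1 := by
    intro k
    have h1 : (star U * U) k k = 1 := by
      rw [Matrix.mem_unitaryGroup_iff'.mp hherm.eigenvectorUnitary.2]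
      simp
    rw [Matrix.mul_apply] at h1
    have h2 : ∀ p : A × B, (star U) k p * U p k = ((Complex.normSq (U p k) : ℝ) : ℂ) := by
      intro p
      rw [Matrix.star_apply, mul_comm,
        show star (U p k) = starRingEnd ℂ (U p k) from rfl, Complex.mul_conj]
    rw [Finset.sum_congr rfl fun p _ => h2 p] at h1
    exact_mod_cast h1
  have hsqnorm : ∀ i, Complex.normSq (ψ i) =
      if i.2.2 = y0 then lam (e.symm i.1.2) * Complex.normSq (U (i.1.1, i.2.1) (e.symm i.1.2))
      else 0 := by
    intro i
    rw [hψ]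
    by_cases h : i.2.2 = y0
    · simp only [h, if_true]
      rw [Complex.normSq_mul, Complex.normSq_ofReal, Real.mul_self_sqrt (hlam0 _)]
    · simp [h]
  refine ⟨ψ, ?_, ?_⟩
  · -- normalization
    have : (∑ i, Complex.normSq (ψ i)) =
        ∑ a : A, ∑ x : Fin N, ∑ b : B, ∑ y : Fin N, Complex.normSq (ψ ((a, x), (b, y))) := by
      rw [Fintype.sum_prod_type (fun i => Complex.normSq (ψ i)),
        Fintype.sum_prod_type]
      refine Finset.sum_congr rfl fun a _ => Finset.sum_congr rfl fun x _ => ?_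
      exact Fintype.sum_prod_type _
    rw [this]
    have hy : ∀ a x b, ∑ y : Fin N, Complex.normSq (ψ ((a, x), (b, y)))
        = lam (e.symm x) * Complex.normSq (U (a, b) (e.symm x)) := by
      intro a x b
      rw [Finset.sum_congr rfl fun y _ => hsqnorm ((a, x), (b, y))]
      simp
    simp only [hy]
    -- now ∑ a ∑ x ∑ b = ∑ x (lam ..) * (∑ a ∑ b normSq) ; reorder
    rw [Finset.sum_comm]
    have hx : ∀ x : Fin N, ∑ a : A, ∑ b : B,
        lam (e.symm x) * Complex.normSq (U (a, b) (e.symm x)) = lam (e.symm x) := by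
      intro x
      rw [show ∑ a : A, ∑ b : B, lam (e.symm x) * Complex.normSq (U (a, b) (e.symm x))
          = lam (e.symm x) * ∑ a : A, ∑ b : B, Complex.normSq (U (a, b) (e.symm x)) from by
        rw [Finset.mul_sum]; exact Finset.sum_congr rfl fun a _ => by rw [Finset.mul_sum]]
      rw [show ∑ a : A, ∑ b : B, Complex.normSq (U (a, b) (e.symm x))
          = ∑ p : A × B, Complex.normSq (U p (e.symm x)) from
        (Fintype.sum_prod_type (fun p : A × B => Complex.normSq (U p (e.symm x)))).symm]
      rw [hcol, mul_one]
    rw [Finset.sum_congr rfl fun x _ => hx x]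
    rw [Fintype.sum_equiv e.symm _ lam (fun x => rfl)]
    exact sum_eig_one hherm hρ.2
  · -- redAB ψ = ρ
    ext p q
    rw [redAB, Matrix.of_apply]
    have hterm : ∀ x : Fin N, ∑ y : Fin N,
        ψ ((p.1, x), (p.2, y)) * star (ψ ((q.1, x), (q.2, y)))
        = ((lam (e.symm x) : ℝ) : ℂ) * (U p (e.symm x) * star (U q (e.symm x))) := by
      intro x
      have hone : ∀ y : Fin N, ψ ((p.1, x), (p.2, y)) * star (ψ ((q.1, x), (q.2, y)))
          = if y = y0 then ((lam (e.symm x) : ℝ) : ℂ) * (U p (e.symm x) * star (U q (e.symm x)))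
            else 0 := by
        intro y
        rw [hψ]
        by_cases h : y = y0
        · simp only [h, if_true]
          rw [star_mul']
          rw [show star (((Real.sqrt (lam (e.symm x)) : ℝ) : ℂ))
              = ((Real.sqrt (lam (e.symm x)) : ℝ) : ℂ) from Complex.conj_ofReal _]
          have : (((Real.sqrt (lam (e.symm x)) : ℝ) : ℂ)) *
              (((Real.sqrt (lam (e.symm x)) : ℝ) : ℂ)) = ((lam (e.symm x) : ℝ) : ℂ) := by
            rw [← Complex.ofReal_mul, Real.mul_self_sqrt (hlam0 _)]
          calc ((Real.sqrt (lam (e.symm x)) : ℝ) : ℂ) * U (p.1, p.2) (e.symm x) *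
                (((Real.sqrt (lam (e.symm x)) : ℝ) : ℂ) * star (U (q.1, q.2) (e.symm x)))
              = (((Real.sqrt (lam (e.symm x)) : ℝ) : ℂ) *
                  ((Real.sqrt (lam (e.symm x)) : ℝ) : ℂ)) *
                (U (p.1, p.2) (e.symm x) * star (U (q.1, q.2) (e.symm x))) := by ring
            _ = _ := by rw [this]
        · simp [h]
      rw [Finset.sum_congr rfl fun y _ => hone y, Finset.sum_ite_eq' Finset.univ y0]
      simp
    rw [Finset.sum_congr rfl fun x _ => hterm x]
    rw [Fintype.sum_equiv e.symm _
      (fun k => ((lam k : ℝ) : ℂ) * (U p k * star (U q k))) (fun x => rfl)]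
    exact (spectral_entry hherm p q).symm

end EPaux3
section EPaux4

lemma redAAp_trace' {A B A' B' : Type*} [Fintype A] [Fintype B] [Fintype A'] [Fintype B']
    (ψ : (A × A') × (B × B') → ℂ) :
    (redAAp ψ).trace = ((∑ i, Complex.normSq (ψ i) : ℝ) : ℂ) := by
  have h1 : (∑ i, Complex.normSq (ψ i)) = ∑ p : A × A', ∑ k : B × B',
      Complex.normSq (ψ (p, k)) := Fintype.sum_prod_type (fun i => Complex.normSq (ψ i))
  rw [h1, Matrix.trace]
  push_cast
  refine Finset.sum_congr rfl fun p _ => ?_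
  rw [show (redAAp ψ).diag p = ∑ k : B × B', ψ (p, k) * star (ψ (p, k)) from by
    simp only [Matrix.diag_apply]; rw [redAAp_eq_gram]; rfl]
  refine Finset.sum_congr rfl fun k _ => ?_
  rw [show star (ψ (p, k)) = starRingEnd ℂ (ψ (p, k)) from rfl, Complex.mul_conj]

lemma combine {A₁ B₁ A₂ B₂ : Type*}
    [Fintype A₁] [Fintype B₁] [Fintype A₂] [Fintype B₂]
    [DecidableEq A₁] [DecidableEq B₁] [DecidableEq A₂] [DecidableEq B₂]
    (ρ : Matrix (A₁ × B₁) (A₁ × B₁) ℂ) (σ : Matrix (A₂ × B₂) (A₂ × B₂) ℂ)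
    (ψ : (A₁ × Fin (Fintype.card A₁ * Fintype.card B₁)) ×
      (B₁ × Fin (Fintype.card A₁ * Fintype.card B₁)) → ℂ)
    (φ : (A₂ × Fin (Fintype.card A₂ * Fintype.card B₂)) ×
      (B₂ × Fin (Fintype.card A₂ * Fintype.card B₂)) → ℂ)
    (hψ : IsPurification ρ ψ) (hφ : IsPurification σ φ) :
    ∃ χ : ((A₁ × A₂) × Fin (Fintype.card (A₁ × A₂) * Fintype.card (B₁ × B₂))) ×
        ((B₁ × B₂) × Fin (Fintype.card (A₁ × A₂) * Fintype.card (B₁ × B₂))) → ℂ,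
      IsPurification (Matrix.of fun p q : (A₁ × A₂) × (B₁ × B₂) =>
        ρ (p.1.1, p.2.1) (q.1.1, q.2.1) * σ (p.1.2, p.2.2) (q.1.2, q.2.2)) χ ∧
      vN (redAAp χ) = vN (redAAp ψ) + vN (redAAp φ) := by
  classical
  have hMN : Fintype.card (A₁ × A₂) * Fintype.card (B₁ × B₂)
      = (Fintype.card A₁ * Fintype.card B₁) * (Fintype.card A₂ * Fintype.card B₂) := by
    rw [Fintype.card_prod, Fintype.card_prod]; ring
  obtain ⟨E⟩ : Nonempty (Fin (Fintype.card (A₁ × A₂) * Fintype.card (B₁ × B₂)) ≃ Fin (Fintype.card A₁ * Fintype.card B₁) × Fin (Fintype.card A₂ * Fintype.card B₂)) :=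
    ⟨(finCongr hMN).trans finProdFinEquiv.symm⟩
  set χ : ((A₁ × A₂) × Fin (Fintype.card (A₁ × A₂) * Fintype.card (B₁ × B₂))) × ((B₁ × B₂) × Fin (Fintype.card (A₁ × A₂) * Fintype.card (B₁ × B₂))) → ℂ := fun i =>
    ψ ((i.1.1.1, (E i.1.2).1), (i.2.1.1, (E i.2.2).1)) *
    φ ((i.1.1.2, (E i.1.2).2), (i.2.1.2, (E i.2.2).2)) with hχ
  -- the reduction on AA' is a reindexed Kronecker product
  set g : (A₁ × A₂) × Fin (Fintype.card (A₁ × A₂) * Fintype.card (B₁ × B₂)) ≃ (A₁ × Fin (Fintype.card A₁ * Fintype.card B₁)) × (A₂ × Fin (Fintype.card A₂ * Fintype.card B₂)) :=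
    ⟨fun u => ((u.1.1, (E u.2).1), (u.1.2, (E u.2).2)),
     fun v => ((v.1.1, v.2.1), E.symm (v.1.2, v.2.2)),
     fun u => by simp,
     fun v => by simp⟩ with hg
  have hred : redAAp χ = ((redAAp ψ) ⊗ₖ (redAAp φ)).submatrix g g := by
    ext P Q
    rw [Matrix.submatrix_apply, Matrix.kroneckerMap_apply]
    rw [redAAp, Matrix.of_apply]
    -- sum over b : B₁ × B₂ and y : Fin (Fintype.card (A₁ × A₂) * Fintype.card (B₁ × B₂))
    have hterm : ∀ (b : B₁ × B₂) (y : Fin (Fintype.card (A₁ × A₂) * Fintype.card (B₁ × B₂))),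
        χ (P, (b, y)) * star (χ (Q, (b, y)))
        = (ψ ((P.1.1, (E P.2).1), (b.1, (E y).1)) *
            star (ψ ((Q.1.1, (E Q.2).1), (b.1, (E y).1)))) *
          (φ ((P.1.2, (E P.2).2), (b.2, (E y).2)) *
            star (φ ((Q.1.2, (E Q.2).2), (b.2, (E y).2)))) := by
      intro b y
      rw [hχ]
      simp only []
      rw [star_mul']
      ring
    calc ∑ b : B₁ × B₂, ∑ y : Fin (Fintype.card (A₁ × A₂) * Fintype.card (B₁ × B₂)), χ (P, (b, y)) * star (χ (Q, (b, y)))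
        = ∑ b : B₁ × B₂, ∑ y : Fin (Fintype.card (A₁ × A₂) * Fintype.card (B₁ × B₂)),
            (ψ ((P.1.1, (E P.2).1), (b.1, (E y).1)) *
              star (ψ ((Q.1.1, (E Q.2).1), (b.1, (E y).1)))) *
            (φ ((P.1.2, (E P.2).2), (b.2, (E y).2)) *
              star (φ ((Q.1.2, (E Q.2).2), (b.2, (E y).2)))) :=
          Finset.sum_congr rfl fun b _ => Finset.sum_congr rfl fun y _ => hterm b y
      _ = ∑ b : B₁ × B₂, ∑ y' : Fin (Fintype.card A₁ * Fintype.card B₁) × Fin (Fintype.card A₂ * Fintype.card B₂),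
            (ψ ((P.1.1, (E P.2).1), (b.1, y'.1)) *
              star (ψ ((Q.1.1, (E Q.2).1), (b.1, y'.1)))) *
            (φ ((P.1.2, (E P.2).2), (b.2, y'.2)) *
              star (φ ((Q.1.2, (E Q.2).2), (b.2, y'.2)))) := by
          refine Finset.sum_congr rfl fun b _ => ?_
          exact Fintype.sum_equiv E _ _ (fun y => rfl)
      _ = ∑ b₁ : B₁, ∑ b₂ : B₂, ∑ y₁ : Fin (Fintype.card A₁ * Fintype.card B₁), ∑ y₂ : Fin (Fintype.card A₂ * Fintype.card B₂),
            (ψ ((P.1.1, (E P.2).1), (b₁, y₁)) *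
              star (ψ ((Q.1.1, (E Q.2).1), (b₁, y₁)))) *
            (φ ((P.1.2, (E P.2).2), (b₂, y₂)) *
              star (φ ((Q.1.2, (E Q.2).2), (b₂, y₂)))) := by
          rw [Fintype.sum_prod_type]
          refine Finset.sum_congr rfl fun b₁ _ => Finset.sum_congr rfl fun b₂ _ => ?_
          exact Fintype.sum_prod_type _
      _ = (∑ b₁ : B₁, ∑ y₁ : Fin (Fintype.card A₁ * Fintype.card B₁),
            ψ ((P.1.1, (E P.2).1), (b₁, y₁)) * star (ψ ((Q.1.1, (E Q.2).1), (b₁, y₁)))) *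
          (∑ b₂ : B₂, ∑ y₂ : Fin (Fintype.card A₂ * Fintype.card B₂),
            φ ((P.1.2, (E P.2).2), (b₂, y₂)) * star (φ ((Q.1.2, (E Q.2).2), (b₂, y₂)))) :=
          sum4_mul _ _
      _ = redAAp ψ (P.1.1, (E P.2).1) (Q.1.1, (E Q.2).1) *
          redAAp φ (P.1.2, (E P.2).2) (Q.1.2, (E Q.2).2) := rfl
  have hψn := hψ.1
  have hφn := hφ.1
  have htχ : (redAAp χ).trace = 1 := by
    rw [hred]
    have : (((redAAp ψ) ⊗ₖ (redAAp φ)).submatrix g g).trace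
        = ((redAAp ψ) ⊗ₖ (redAAp φ)).trace := by
      rw [Matrix.trace, Matrix.trace]
      exact Equiv.sum_comp g (fun j => ((redAAp ψ) ⊗ₖ (redAAp φ)).diag j)
    rw [this, Matrix.trace_kronecker, redAAp_trace' ψ, redAAp_trace' φ, hψn, hφn]
    norm_num
  have hnormχ : (∑ i, Complex.normSq (χ i)) = 1 := by
    have := (redAAp_trace' χ).symm.trans htχ
    exact_mod_cast this
  refine ⟨χ, ⟨hnormχ, ?_⟩, ?_⟩
  · -- redAB χ equals the product state
    ext p q
    rw [redAB, Matrix.of_apply, Matrix.of_apply]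
    have hterm : ∀ (x y : Fin (Fintype.card (A₁ × A₂) * Fintype.card (B₁ × B₂))),
        χ ((p.1, x), (p.2, y)) * star (χ ((q.1, x), (q.2, y)))
        = (ψ ((p.1.1, (E x).1), (p.2.1, (E y).1)) *
            star (ψ ((q.1.1, (E x).1), (q.2.1, (E y).1)))) *
          (φ ((p.1.2, (E x).2), (p.2.2, (E y).2)) *
            star (φ ((q.1.2, (E x).2), (q.2.2, (E y).2)))) := by
      intro x y
      rw [hχ]
      simp only []
      rw [star_mul']
      ring
    calc ∑ x : Fin (Fintype.card (A₁ × A₂) * Fintype.card (B₁ × B₂)), ∑ y : Fin (Fintype.card (A₁ × A₂) * Fintype.card (B₁ × B₂)), χ ((p.1, x), (p.2, y)) * star (χ ((q.1, x), (q.2, y)))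
        = ∑ x : Fin (Fintype.card (A₁ × A₂) * Fintype.card (B₁ × B₂)), ∑ y : Fin (Fintype.card (A₁ × A₂) * Fintype.card (B₁ × B₂)),
            (ψ ((p.1.1, (E x).1), (p.2.1, (E y).1)) *
              star (ψ ((q.1.1, (E x).1), (q.2.1, (E y).1)))) *
            (φ ((p.1.2, (E x).2), (p.2.2, (E y).2)) *
              star (φ ((q.1.2, (E x).2), (q.2.2, (E y).2)))) :=
          Finset.sum_congr rfl fun x _ => Finset.sum_congr rfl fun y _ => hterm x y
      _ = ∑ x' : Fin (Fintype.card A₁ * Fintype.card B₁) × Fin (Fintype.card A₂ * Fintype.card B₂), ∑ y' : Fin (Fintype.card A₁ * Fintype.card B₁) × Fin (Fintype.card A₂ * Fintype.card B₂),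
            (ψ ((p.1.1, x'.1), (p.2.1, y'.1)) * star (ψ ((q.1.1, x'.1), (q.2.1, y'.1)))) *
            (φ ((p.1.2, x'.2), (p.2.2, y'.2)) * star (φ ((q.1.2, x'.2), (q.2.2, y'.2)))) := by
          refine Fintype.sum_equiv E _ _ fun x => ?_
          exact Fintype.sum_equiv E _ _ (fun y => rfl)
      _ = ∑ x₁ : Fin (Fintype.card A₁ * Fintype.card B₁), ∑ x₂ : Fin (Fintype.card A₂ * Fintype.card B₂), ∑ y₁ : Fin (Fintype.card A₁ * Fintype.card B₁), ∑ y₂ : Fin (Fintype.card A₂ * Fintype.card B₂),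
            (ψ ((p.1.1, x₁), (p.2.1, y₁)) * star (ψ ((q.1.1, x₁), (q.2.1, y₁)))) *
            (φ ((p.1.2, x₂), (p.2.2, y₂)) * star (φ ((q.1.2, x₂), (q.2.2, y₂)))) := by
          rw [Fintype.sum_prod_type]
          refine Finset.sum_congr rfl fun x₁ _ => Finset.sum_congr rfl fun x₂ _ => ?_
          exact Fintype.sum_prod_type _
      _ = (∑ x₁ : Fin (Fintype.card A₁ * Fintype.card B₁), ∑ y₁ : Fin (Fintype.card A₁ * Fintype.card B₁),
            ψ ((p.1.1, x₁), (p.2.1, y₁)) * star (ψ ((q.1.1, x₁), (q.2.1, y₁)))) *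
          (∑ x₂ : Fin (Fintype.card A₂ * Fintype.card B₂), ∑ y₂ : Fin (Fintype.card A₂ * Fintype.card B₂),
            φ ((p.1.2, x₂), (p.2.2, y₂)) * star (φ ((q.1.2, x₂), (q.2.2, y₂)))) :=
          sum4_mul _ _
      _ = redAB ψ (p.1.1, p.2.1) (q.1.1, q.2.1) * redAB φ (p.1.2, p.2.2) (q.1.2, q.2.2) := rfl
      _ = ρ (p.1.1, p.2.1) (q.1.1, q.2.1) * σ (p.1.2, p.2.2) (q.1.2, q.2.2) := by
          rw [hψ.2, hφ.2]
  · -- vN additivity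
    exact vN_kron (redAAp_posSemidef ψ) (redAAp_posSemidef φ)
      (redAAp_trace ψ hψn) (redAAp_trace φ hφn) g (redAAp χ) hred (redAAp_posSemidef χ).1

end EPaux4
section EPaux5

lemma EP_le_vN {A B : Type*} [Fintype A] [Fintype B] [DecidableEq A] [DecidableEq B]
    (τ : Matrix (A × B) (A × B) ℂ)
    (χ : (A × Fin (Fintype.card A * Fintype.card B)) ×
      (B × Fin (Fintype.card A * Fintype.card B)) → ℂ)
    (hp : IsPurification τ χ) : EP τ ≤ vN (redAAp χ) := by
  refine csInf_le ⟨0, fun e he => ?_⟩ ⟨χ, hp, rfl⟩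
  obtain ⟨χ', hp', rfl⟩ := he
  exact vN_nonneg (redAAp_posSemidef χ') (redAAp_trace χ' hp'.1)

end EPaux5

/-- subadditivity of `E_P` under tensor products,
across the cut `A₁A₂ : B₁B₂`. -/
theorem EP_subadditive {A₁ B₁ A₂ B₂ : Type*}
    [Fintype A₁] [Fintype B₁] [Fintype A₂] [Fintype B₂]
    [DecidableEq A₁] [DecidableEq B₁] [DecidableEq A₂] [DecidableEq B₂]
    (ρ : Matrix (A₁ × B₁) (A₁ × B₁) ℂ) (σ : Matrix (A₂ × B₂) (A₂ × B₂) ℂ)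
    (hρ : IsDensity ρ) (hσ : IsDensity σ) :
    EP (Matrix.of fun p q : (A₁ × A₂) × (B₁ × B₂) =>
        ρ (p.1.1, p.2.1) (q.1.1, q.2.1) * σ (p.1.2, p.2.2) (q.1.2, q.2.2))
      ≤ EP ρ + EP σ := by
  classical
  obtain ⟨ψ0, hψ0⟩ := exists_purification ρ hρ
  obtain ⟨φ0, hφ0⟩ := exists_purification σ hσ
  set τ : Matrix ((A₁ × A₂) × (B₁ × B₂)) ((A₁ × A₂) × (B₁ × B₂)) ℂ :=
    Matrix.of fun p q : (A₁ × A₂) × (B₁ × B₂) =>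
      ρ (p.1.1, p.2.1) (q.1.1, q.2.1) * σ (p.1.2, p.2.2) (q.1.2, q.2.2) with hτ
  have key : ∀ (ψ : (A₁ × Fin (Fintype.card A₁ * Fintype.card B₁)) ×
        (B₁ × Fin (Fintype.card A₁ * Fintype.card B₁)) → ℂ)
      (φ : (A₂ × Fin (Fintype.card A₂ * Fintype.card B₂)) ×
        (B₂ × Fin (Fintype.card A₂ * Fintype.card B₂)) → ℂ),
      IsPurification ρ ψ → IsPurification σ φ →
      EP τ ≤ vN (redAAp ψ) + vN (redAAp φ) := by
    intro ψ φ h1 h2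
    obtain ⟨χ, hχp, hχv⟩ := combine ρ σ ψ φ h1 h2
    exact hχv ▸ EP_le_vN τ χ hχp
  set S₁ : Set ℝ := {e | ∃ ψ : (A₁ × Fin (Fintype.card A₁ * Fintype.card B₁)) ×
      (B₁ × Fin (Fintype.card A₁ * Fintype.card B₁)) → ℂ,
      IsPurification ρ ψ ∧ e = vN (redAAp ψ)} with hS₁
  set S₂ : Set ℝ := {e | ∃ φ : (A₂ × Fin (Fintype.card A₂ * Fintype.card B₂)) ×
      (B₂ × Fin (Fintype.card A₂ * Fintype.card B₂)) → ℂ,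
      IsPurification σ φ ∧ e = vN (redAAp φ)} with hS₂
  have hne1 : S₁.Nonempty := ⟨_, ψ0, hψ0, rfl⟩
  have hne2 : S₂.Nonempty := ⟨_, φ0, hφ0, rfl⟩
  have hEPρ : EP ρ = sInf S₁ := rfl
  have hEPσ : EP σ = sInf S₂ := rfl
  have h2 : ∀ x ∈ S₁, EP τ ≤ x + EP σ := by
    rintro x ⟨ψ, hψp, rfl⟩
    have hle : EP τ - vN (redAAp ψ) ≤ sInf S₂ := by
      refine le_csInf hne2 ?_
      rintro y ⟨φ, hφp, rfl⟩
      have := key ψ φ hψp hφp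
      linarith
    rw [hEPσ]
    linarith
  have h3 : EP τ - EP σ ≤ EP ρ := by
    rw [hEPρ]
    refine le_csInf hne1 fun x hx => ?_
    have := h2 x hx
    linarith
  linarith

end
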